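/- Let n ≥ 2 and let (Ω, 𝓕, P) be a standard Borel probability space carrying mutually independent random variables X₁, …, Xₙ : Ω → Bool, each uniformly distributed on Bool, and let Y = X₁ XOR X₂ XOR ⋯ XOR Xₙ. Then for every proper subset S ⊊ {2,…,n}, X₁ and Y are conditionally independent given the σ-algebra generated by (X_i)_{i ∈ S}; but X₁ and Y are NOT conditionally independent given the σ-algebra generated by (X_i)_{i ∈ {2,…,n}}. -/

import Mathlib

open MeasureTheory ProbabilityTheory

namespace ParityAux

variable {Ω : Type*} {m mΩ : MeasurableSpace Ω} {μ : Measure Ω} [IsProbabilityMeasure μ]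

lemma setIntegral_indicator_one {A s : Set Ω} (hA : MeasurableSet A) :
    ∫ x in s, A.indicator (fun _ => (1:ℝ)) x ∂μ = (μ (A ∩ s)).toReal := by
  rw [integral_indicator_const (1:ℝ) hA, measureReal_def, Measure.restrict_apply hA, smul_eq_mul, mul_one]

/-- Pull-out lemma for conditional expectation of an intersection with a set independent of a
larger σ-algebra. -/
lemma condexp_indep_inter (hm : m ≤ mΩ)
    {A D : Set Ω} (hA : MeasurableSet[mΩ] A) (hD : MeasurableSet[mΩ] D)
    (h : ∀ C, MeasurableSet[m] C → μ (A ∩ (D ∩ C)) = μ A * μ (D ∩ C)) :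
    (μ⟦A ∩ D | m⟧) =ᵐ[μ] fun ω => (μ A).toReal * (μ⟦D | m⟧) ω := by
  refine (ae_eq_condExp_of_forall_setIntegral_eq hm
    ((integrable_const (1:ℝ)).indicator (hA.inter hD))
    (fun s _ _ => (integrable_condExp.const_mul _).integrableOn)
    (fun s hs _ => ?_)
    (StronglyMeasurable.aestronglyMeasurable (stronglyMeasurable_condExp.const_mul _))).symm
  rw [integral_const_mul, setIntegral_condExp hm ((integrable_const (1:ℝ)).indicator hD) hs,
    setIntegral_indicator_one hD, setIntegral_indicator_one (hA.inter hD),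
    Set.inter_assoc, h s hs, ENNReal.toReal_mul]

lemma condexp_indep (hm : m ≤ mΩ)
    {A : Set Ω} (hA : MeasurableSet[mΩ] A)
    (h : ∀ C, MeasurableSet[m] C → μ (A ∩ C) = μ A * μ C) :
    (μ⟦A | m⟧) =ᵐ[μ] fun _ => (μ A).toReal := by
  have h' : ∀ C, MeasurableSet[m] C → μ (A ∩ (Set.univ ∩ C)) = μ A * μ (Set.univ ∩ C) := by
    intro C hC; rw [Set.univ_inter]; exact h C hC
  have h2 := condexp_indep_inter hm hA MeasurableSet.univ h'
  rw [Set.inter_univ] at h2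
  have h1 : (μ⟦(Set.univ : Set Ω) | m⟧) = fun _ => (1:ℝ) := by
    rw [Set.indicator_univ]; exact condExp_const hm 1
  refine h2.trans (Filter.EventuallyEq.of_eq ?_)
  funext ω; rw [h1]; simp

end ParityAux

namespace ParityAux2

open ParityAux

variable {Ω : Type*} {mΩ : MeasurableSpace Ω} {μ : Measure Ω} [IsProbabilityMeasure μ]

lemma preimage_false {U : Ω → Bool} : U ⁻¹' {false} = (U ⁻¹' {true})ᶜ := by
  ext ω; cases h : U ω <;> simp [h]

lemma measure_false {U : Ω → Bool} (hU : Measurable U) (hu : μ (U ⁻¹' {true}) = 1/2) :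
    μ (U ⁻¹' {false}) = 1/2 := by
  rw [preimage_false, prob_compl_eq_one_sub (hU (measurableSet_singleton true)), hu]
  exact ENNReal.sub_half ENNReal.one_ne_top

/-- Master computation: if `U` is uniform and independent of `(W, V)` then
`xor U W = b` has conditional probability `1/2` on every `V`-event. -/
lemma measure_xor_inter {γ : Type*} [MeasurableSpace γ] {U W : Ω → Bool} {V : Ω → γ}
    (hU : Measurable U) (hW : Measurable W) (hV : Measurable V)
    (hu : μ (U ⁻¹' {true}) = 1/2)
    (h : IndepFun U (fun ω => (W ω, V ω)) μ) (b : Bool) {t : Set γ} (ht : MeasurableSet t) :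
    μ ((fun ω => xor (U ω) (W ω)) ⁻¹' {b} ∩ V ⁻¹' t) = 1/2 * μ (V ⁻¹' t) := by
  have hWV : Measurable fun ω => (W ω, V ω) := hW.prodMk hV
  have hsplit : (fun ω => xor (U ω) (W ω)) ⁻¹' {b} ∩ V ⁻¹' t =
      (U ⁻¹' {true} ∩ (fun ω => (W ω, V ω)) ⁻¹' ({!b} ×ˢ t)) ∪
      (U ⁻¹' {false} ∩ (fun ω => (W ω, V ω)) ⁻¹' ({b} ×ˢ t)) := by
    ext ω
    cases b <;> cases hUω : U ω <;> cases hWω : W ω <;>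
      simp [hUω, hWω, Set.mem_prod]
  rw [hsplit, measure_union ?_ ((hU (measurableSet_singleton false)).inter
      (hWV ((measurableSet_singleton b).prod ht)))]
  swap
  · refine Set.disjoint_left.2 fun ω h1 h2 => ?_
    have e1 : U ω = true := h1.1
    have e2 : U ω = false := h2.1
    rw [e1] at e2; exact Bool.noConfusion e2
  rw [h.measure_inter_preimage_eq_mul _ _ (measurableSet_singleton true)
      ((measurableSet_singleton (!b)).prod ht),
    h.measure_inter_preimage_eq_mul _ _ (measurableSet_singleton false)
      ((measurableSet_singleton b).prod ht),
    hu, measure_false hU hu, ← mul_add]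
  congr 1
  rw [Set.mk_preimage_prod, Set.mk_preimage_prod,
    ← measure_union ?_ ((hW (measurableSet_singleton b)).inter (hV ht))]
  · congr 1
    ext ω
    cases b <;> cases hWω : W ω <;> simp [hWω]
  · refine Set.disjoint_left.2 fun ω h1 h2 => ?_
    have e1 : W ω = !b := h1.1
    have e2 : W ω = b := h2.1
    rw [e2] at e1
    cases b <;> exact Bool.noConfusion e1

lemma boolset (s : Set Bool) : s = ∅ ∨ s = {true} ∨ s = {false} ∨ s = Set.univ := by
  by_cases h1 : true ∈ s <;> by_cases h2 : false ∈ s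
  · right; right; right; ext b; cases b <;> simp [h1, h2]
  · right; left; ext b; cases b <;> simp [h1, h2]
  · right; right; left; ext b; cases b <;> simp [h1, h2]
  · left; ext b; cases b <;> simp [h1, h2]

lemma measure_xor_true {γ : Type*} [MeasurableSpace γ] {U W : Ω → Bool} {V : Ω → γ}
    (hU : Measurable U) (hW : Measurable W) (hV : Measurable V)
    (hu : μ (U ⁻¹' {true}) = 1/2)
    (h : IndepFun U (fun ω => (W ω, V ω)) μ) (b : Bool) :
    μ ((fun ω => xor (U ω) (W ω)) ⁻¹' {b}) = 1/2 := by
  have := measure_xor_inter hU hW hV hu h b (t := Set.univ) MeasurableSet.univ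
  simpa using this

lemma indepFun_xor {γ : Type*} [MeasurableSpace γ] {U W : Ω → Bool} {V : Ω → γ}
    (hU : Measurable U) (hW : Measurable W) (hV : Measurable V)
    (hu : μ (U ⁻¹' {true}) = 1/2)
    (h : IndepFun U (fun ω => (W ω, V ω)) μ) :
    IndepFun (fun ω => xor (U ω) (W ω)) V μ := by
  rw [indepFun_iff_measure_inter_preimage_eq_mul]
  intro s t hs ht
  rcases boolset s with rfl | rfl | rfl | rfl
  · rw [Set.preimage_empty, Set.empty_inter, measure_empty, zero_mul]
  · rw [measure_xor_inter hU hW hV hu h true ht, measure_xor_true hU hW hV hu h true]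
  · rw [measure_xor_inter hU hW hV hu h false ht, measure_xor_true hU hW hV hu h false]
  · rw [Set.preimage_univ, Set.univ_inter, measure_univ, one_mul]

end ParityAux2

namespace ParityAux3

def e (b : Bool) : ZMod 2 := if b then 1 else 0

lemma foldr_xor (l : List Bool) : l.foldr xor false = decide ((l.map e).sum = 1) := by
  induction l with
  | nil => simp
  | cons b l ih =>
    simp only [List.foldr_cons, List.map_cons, List.sum_cons, ih]
    have key : ∀ (b : Bool) (z : ZMod 2), (b ^^ decide (z = 1)) = decide (e b + z = 1) := by
      decide
    exact key b _

lemma parity_eq {n : ℕ} (x : Fin n → Bool) :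
    (List.ofFn fun i => x i).foldr xor false = decide ((∑ i, e (x i)) = 1) := by
  rw [foldr_xor, List.map_ofFn, List.sum_ofFn]
  rfl

lemma parity_split {n : ℕ} (j : Fin n) (x : Fin n → Bool) :
    decide ((∑ i, e (x i)) = 1)
      = xor (x j) (decide ((∑ i ∈ Finset.univ.erase j, e (x i)) = 1)) := by
  have hx : ∀ (b : Bool) (z : ZMod 2), decide (e b + z = 1) = xor b (decide (z = 1)) := by
    decide
  rw [← Finset.add_sum_erase _ _ (Finset.mem_univ j)]
  exact hx _ _

end ParityAux3

section Main

open ParityAux ParityAux2 ParityAux3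

lemma xj_indep {Ω : Type*} {mΩ : MeasurableSpace Ω} {μ : Measure Ω} {n : ℕ}
    {X : Fin n → Ω → Bool} (hX : ∀ i, Measurable (X i))
    (hIndep : iIndepFun X μ) (j : Fin n)
    {γ : Type*} [MeasurableSpace γ]
    (Φ : (↥(Finset.univ.erase j : Finset (Fin n)) → Bool) → γ) :
    IndepFun (X j) (fun ω => Φ (fun i : (Finset.univ.erase j : Finset (Fin n)) => X i ω)) μ := by
  have h := hIndep.indepFun_finset {j} (Finset.univ.erase j) (by simp) hX
  exact h.comp (φ := fun v : ↥({j} : Finset (Fin n)) → Bool =>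
    v ⟨j, Finset.mem_singleton_self j⟩) (measurable_of_countable _) (measurable_of_countable Φ)

end Main

/-- **Proposition 1 of the paper, parity case.**
For `n ≥ 2` mutually independent uniform Boolean sources on a standard Borel
probability space and the parity target `Y = X₁ XOR ⋯ XOR Xₙ`:
`X₁` is conditionally independent of `Y` given any **proper** subset of the
remaining sources, but NOT conditionally independent of `Y` given **all**
remaining sources. -/
theorem parity_condIndep_iff_all_parents {Ω : Type*} [MeasurableSpace Ω]
    [StandardBorelSpace Ω] {P : Measure Ω} [IsProbabilityMeasure P]
    {n : ℕ} (hn : 2 ≤ n) (X : Fin n → Ω → Bool)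
    (hX : ∀ i, Measurable (X i))
    (hIndep : iIndepFun X P)
    (hu : ∀ i, P (X i ⁻¹' {true}) = 1/2)
    (Y : Ω → Bool) (hY : Y = fun ω => (List.ofFn fun i => X i ω).foldr Bool.xor false)
    (i₀ : Fin n) (hi₀ : (i₀ : ℕ) = 0) :
    (∀ S : Finset (Fin n), S ⊂ Finset.univ.erase i₀ →
      CondIndepFun (MeasurableSpace.comap (fun ω => fun i : S => X i ω) MeasurableSpace.pi)
        ((measurable_pi_lambda _ fun i : S => hX i).comap_le) (X i₀) Y P) ∧
    ¬ CondIndepFun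
        (MeasurableSpace.comap
          (fun ω => fun i : (Finset.univ.erase i₀) => X i ω) MeasurableSpace.pi)
        ((measurable_pi_lambda _ fun i : (Finset.univ.erase i₀) => hX i).comap_le)
        (X i₀) Y P := by
  classical
  have hc : ((1:ENNReal)/2).toReal = (1/2 : ℝ) := by
    rw [ENNReal.toReal_div, ENNReal.toReal_one, ENNReal.toReal_ofNat]
  have hYd : Y = fun ω => decide ((∑ i, ParityAux3.e (X i ω)) = 1) := by
    funext ω; simp only [hY]; exact ParityAux3.parity_eq (fun i => X i ω)
  constructor
  · -- positive part
    intro S hS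
    obtain ⟨j, hjT, hjS⟩ := Finset.exists_of_ssubset hS
    have hji₀ : j ≠ i₀ := Finset.ne_of_mem_erase hjT
    have hi₀T : i₀ ∈ Finset.univ.erase j := Finset.mem_erase.2 ⟨hji₀.symm, Finset.mem_univ _⟩
    have hiT : ∀ i : S, (i : Fin n) ∈ Finset.univ.erase j := fun i =>
      Finset.mem_erase.2 ⟨fun hc => hjS (hc ▸ i.2), Finset.mem_univ _⟩
    set T : Finset (Fin n) := Finset.univ.erase j with hT
    set φ : (↥T → Bool) → Bool :=
      fun v => decide ((∑ i : T, ParityAux3.e (v i)) = 1) with hφ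
    set W : Ω → Bool := fun ω => φ (fun i : T => X i ω) with hWdef
    set V : Ω → Bool × (↥S → Bool) := fun ω => (X i₀ ω, fun i : S => X i ω) with hVdef
    have htupm : Measurable (fun ω => fun i : T => X i ω) :=
      measurable_pi_lambda _ fun i => hX i
    have hWm : Measurable W := (measurable_of_countable φ).comp htupm
    have hVm : Measurable V := (hX i₀).prodMk (measurable_pi_lambda _ fun i => hX i)
    have hUWV : IndepFun (X j) (fun ω => (W ω, V ω)) P :=
      xj_indep hX hIndep j
        (Φ := fun v => (φ v, (v ⟨i₀, hi₀T⟩, fun i : S => v ⟨i, hiT i⟩)))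
    have hYxor : Y = fun ω => xor (X j ω) (W ω) := by
      funext ω
      simp only [hYd, hWdef, hφ]
      have hsum := Finset.sum_coe_sort T (fun i => ParityAux3.e (X i ω))
      rw [hsum]
      exact ParityAux3.parity_split j (fun i => X i ω)
    have hYm : Measurable Y := by
      rw [hYxor]
      exact (measurable_of_countable (fun p : Bool × Bool => xor p.1 p.2)).comp
        ((hX j).prodMk hWm)
    have hYV : IndepFun Y V P := by
      rw [hYxor]; exact ParityAux2.indepFun_xor (hX j) hWm hVm (hu j) hUWV
    refine (condIndepFun_iff_condExp_inter_preimage_eq_mul (hX i₀) hYm).mpr ?_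
    intro s t hs ht
    have hmle : MeasurableSpace.comap (fun ω => fun i : S => X i ω) MeasurableSpace.pi
        ≤ _ := (measurable_pi_lambda _ fun i : S => hX i).comap_le
    have h1 : ∀ C, MeasurableSet[MeasurableSpace.comap
          (fun ω => fun i : S => X i ω) MeasurableSpace.pi] C →
        P (Y ⁻¹' t ∩ (X i₀ ⁻¹' s ∩ C)) = P (Y ⁻¹' t) * P (X i₀ ⁻¹' s ∩ C) := by
      rintro C ⟨u, hu', rfl⟩
      have : X i₀ ⁻¹' s ∩ (fun ω => fun i : S => X i ω) ⁻¹' u = V ⁻¹' (s ×ˢ u) :=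
        (Set.mk_preimage_prod _ _).symm
      rw [this]
      exact hYV.measure_inter_preimage_eq_mul _ _ ht (hs.prod hu')
    have h2 : ∀ C, MeasurableSet[MeasurableSpace.comap
          (fun ω => fun i : S => X i ω) MeasurableSpace.pi] C →
        P (Y ⁻¹' t ∩ C) = P (Y ⁻¹' t) * P C := by
      rintro C ⟨u, hu', rfl⟩
      have : (fun ω => fun i : S => X i ω) ⁻¹' u = V ⁻¹' (Set.univ ×ˢ u) := by
        rw [Set.mk_preimage_prod, Set.preimage_univ, Set.univ_inter]
      rw [this]
      exact hYV.measure_inter_preimage_eq_mul _ _ ht (MeasurableSet.univ.prod hu')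
    have hE1 := ParityAux.condexp_indep_inter hmle (hYm ht) (hX i₀ hs) h1
    have hE2 := ParityAux.condexp_indep hmle (hYm ht) h2
    rw [Set.inter_comm (X i₀ ⁻¹' s) (Y ⁻¹' t)]
    refine hE1.trans ?_
    filter_upwards [hE2] with ω h2ω
    rw [h2ω, mul_comm]
  · -- negative part
    intro hcond
    set T₀ : Finset (Fin n) := Finset.univ.erase i₀ with hT₀
    set ψ : (↥T₀ → Bool) → Bool :=
      fun v => decide ((∑ i : T₀, ParityAux3.e (v i)) = 1) with hψ
    set Cf : Ω → Bool := fun ω => ψ (fun i : T₀ => X i ω) with hCfdef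
    set B : Set Ω := Cf ⁻¹' {false} with hBdef
    have htupm : Measurable (fun ω => fun i : T₀ => X i ω) :=
      measurable_pi_lambda _ fun i => hX i
    have hCfm : Measurable Cf := (measurable_of_countable ψ).comp htupm
    have hmle : MeasurableSpace.comap (fun ω => fun i : T₀ => X i ω) MeasurableSpace.pi
        ≤ _ := (measurable_pi_lambda _ fun i : T₀ => hX i).comap_le
    have hYxor : Y = fun ω => xor (X i₀ ω) (Cf ω) := by
      funext ω
      simp only [hYd, hCfdef, hψ]
      have hsum := Finset.sum_coe_sort T₀ (fun i => ParityAux3.e (X i ω))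
      rw [hsum]
      exact ParityAux3.parity_split i₀ (fun i => X i ω)
    have hYm : Measurable Y := by
      rw [hYxor]
      exact (measurable_of_countable (fun p : Bool × Bool => xor p.1 p.2)).comp
        ((hX i₀).prodMk hCfm)
    have hBmΩ : MeasurableSet B := hCfm (measurableSet_singleton false)
    have hBm : MeasurableSet[MeasurableSpace.comap
        (fun ω => fun i : T₀ => X i ω) MeasurableSpace.pi] B :=
      ⟨ψ ⁻¹' {false}, (measurable_of_countable ψ) (measurableSet_singleton false), rfl⟩
    have hXtup : IndepFun (X i₀) (fun ω => fun i : T₀ => X i ω) P :=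
      xj_indep hX hIndep i₀ (Φ := id)
    have hUWV₀ : IndepFun (X i₀) (fun ω => (Cf ω, fun i : T₀ => X i ω)) P :=
      xj_indep hX hIndep i₀ (Φ := fun v => (ψ v, v))
    have hYtup : IndepFun Y (fun ω => fun i : T₀ => X i ω) P := by
      rw [hYxor]
      exact ParityAux2.indepFun_xor (hX i₀) hCfm htupm (hu i₀) hUWV₀
    have hY12 : P (Y ⁻¹' {true}) = 1/2 := by
      rw [hYxor]
      exact ParityAux2.measure_xor_true (hX i₀) hCfm htupm (hu i₀) hUWV₀ true
    have h := (condIndepFun_iff_condExp_inter_preimage_eq_mul (hX i₀) hYm).mp hcond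
      {true} {true} (measurableSet_singleton true) (measurableSet_singleton true)
    have hset : X i₀ ⁻¹' {true} ∩ Y ⁻¹' {true} = X i₀ ⁻¹' {true} ∩ B := by
      ext ω
      have hYω : Y ω = xor (X i₀ ω) (Cf ω) := congrFun hYxor ω
      cases hXω : X i₀ ω <;> cases hCω : Cf ω <;>
        simp [hBdef, hYω, hXω, hCω]
    rw [hset] at h
    have h1 : ∀ C, MeasurableSet[MeasurableSpace.comap
          (fun ω => fun i : T₀ => X i ω) MeasurableSpace.pi] C →
        P (X i₀ ⁻¹' {true} ∩ (B ∩ C)) = P (X i₀ ⁻¹' {true}) * P (B ∩ C) := by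
      rintro C ⟨u, hu', rfl⟩
      have : B ∩ (fun ω => fun i : T₀ => X i ω) ⁻¹' u
          = (fun ω => fun i : T₀ => X i ω) ⁻¹' (ψ ⁻¹' {false} ∩ u) := by
        rw [Set.preimage_inter]; rfl
      rw [this]
      exact hXtup.measure_inter_preimage_eq_mul _ _ (measurableSet_singleton true)
        (((measurable_of_countable ψ) (measurableSet_singleton false)).inter hu')
    have hA := ParityAux.condexp_indep_inter hmle
      (hX i₀ (measurableSet_singleton true)) hBmΩ h1
    have hsm : StronglyMeasurable[MeasurableSpace.comap
        (fun ω => fun i : T₀ => X i ω) MeasurableSpace.pi]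
        (B.indicator (fun _ => (1:ℝ))) :=
      StronglyMeasurable.indicator stronglyMeasurable_const hBm
    have hcondB : (P⟦B | MeasurableSpace.comap
        (fun ω => fun i : T₀ => X i ω) MeasurableSpace.pi⟧)
        = B.indicator (fun _ => (1:ℝ)) :=
      condExp_of_stronglyMeasurable hmle hsm ((integrable_const (1:ℝ)).indicator hBmΩ)
    have hAB : (P⟦X i₀ ⁻¹' {true} ∩ B | MeasurableSpace.comap
        (fun ω => fun i : T₀ => X i ω) MeasurableSpace.pi⟧)
        =ᵐ[P] fun ω => (1/2 : ℝ) * B.indicator (fun _ => (1:ℝ)) ω := by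
      refine hA.trans (Filter.EventuallyEq.of_eq ?_)
      funext ω
      rw [hu i₀, hcondB, hc]
    have hX1 : ∀ C, MeasurableSet[MeasurableSpace.comap
          (fun ω => fun i : T₀ => X i ω) MeasurableSpace.pi] C →
        P (X i₀ ⁻¹' {true} ∩ C) = P (X i₀ ⁻¹' {true}) * P C := by
      rintro C ⟨u, hu', rfl⟩
      exact hXtup.measure_inter_preimage_eq_mul _ _ (measurableSet_singleton true) hu'
    have hY1 : ∀ C, MeasurableSet[MeasurableSpace.comap
          (fun ω => fun i : T₀ => X i ω) MeasurableSpace.pi] C →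
        P (Y ⁻¹' {true} ∩ C) = P (Y ⁻¹' {true}) * P C := by
      rintro C ⟨u, hu', rfl⟩
      exact hYtup.measure_inter_preimage_eq_mul _ _ (measurableSet_singleton true) hu'
    have hXc : (P⟦X i₀ ⁻¹' {true} | MeasurableSpace.comap
        (fun ω => fun i : T₀ => X i ω) MeasurableSpace.pi⟧)
        =ᵐ[P] fun _ => (1/2 : ℝ) := by
      refine (ParityAux.condexp_indep hmle (hX i₀ (measurableSet_singleton true)) hX1).trans
        (Filter.EventuallyEq.of_eq ?_)
      funext ω; rw [hu i₀, hc]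
    have hYc : (P⟦Y ⁻¹' {true} | MeasurableSpace.comap
        (fun ω => fun i : T₀ => X i ω) MeasurableSpace.pi⟧)
        =ᵐ[P] fun _ => (1/2 : ℝ) := by
      refine (ParityAux.condexp_indep hmle (hYm (measurableSet_singleton true)) hY1).trans
        (Filter.EventuallyEq.of_eq ?_)
      funext ω; rw [hY12, hc]
    have hcontr : (fun ω => (1/2 : ℝ) * B.indicator (fun _ => (1:ℝ)) ω)
        =ᵐ[P] fun _ => (1/2 : ℝ) * (1/2 : ℝ) := by
      refine (hAB.symm.trans h).trans ?_
      filter_upwards [hXc, hYc] with ω e1 e2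
      rw [e1, e2]
    have hne : (MeasureTheory.ae P).NeBot := by
      refine MeasureTheory.ae_neBot.2 ?_
      exact (IsProbabilityMeasure.ne_zero P)
    obtain ⟨ω, hω⟩ := hcontr.exists
    simp only [Set.indicator_apply] at hω
    by_cases hωB : ω ∈ B
    · rw [if_pos hωB] at hω; norm_num at hω
    · rw [if_neg hωB] at hω; norm_num at hω
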